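/- Let 𝒜 be a unital ring and n₁, n₂ ∈ ℕ. Let u₁ ∈ M_{1×n₁}(𝒜), v₁ ∈ M_{n₁×1}(𝒜), u₂ ∈ M_{1×n₂}(𝒜), v₂ ∈ M_{n₂×1}(𝒜), and let Q₁ ∈ M_{n₁×n₁}(𝒜), Q₂ ∈ M_{n₂×n₂}(𝒜) be invertible. Then the block matrix Q := [[v₁·u₂, Q₁], [Q₂, 0]] of size (n₁+n₂) is invertible with Q⁻¹ = [[0, Q₂⁻¹], [Q₁⁻¹, −Q₁⁻¹·v₁·u₂·Q₂⁻¹]], and −[0, u₁] · Q⁻¹ · [0; v₂] = (−u₁·Q₁⁻¹·v₁)·(−u₂·Q₂⁻¹·v₂) as 1×1 matrices over 𝒜, where [0, u₁] is the 1×(n₁+n₂) block row and [0; v₂] the (n₁+n₂)×1 block column. -/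

import Mathlib

set_option maxHeartbeats 1000000 in
theorem stmt_10 (𝒜 : Type*) [Ring 𝒜] (n₁ n₂ : ℕ)
    (u₁ : Matrix (Fin 1) (Fin n₁) 𝒜) (v₁ : Matrix (Fin n₁) (Fin 1) 𝒜)
    (u₂ : Matrix (Fin 1) (Fin n₂) 𝒜) (v₂ : Matrix (Fin n₂) (Fin 1) 𝒜)
    (Q₁ : Matrix (Fin n₁) (Fin n₁) 𝒜) (Q₂ : Matrix (Fin n₂) (Fin n₂) 𝒜)
    [Invertible Q₁] [Invertible Q₂] :
    let Q : Matrix (Fin n₁ ⊕ Fin n₂) (Fin n₂ ⊕ Fin n₁) 𝒜 :=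
      Matrix.fromBlocks (v₁ * u₂) Q₁ Q₂ 0
    let Qinv : Matrix (Fin n₂ ⊕ Fin n₁) (Fin n₁ ⊕ Fin n₂) 𝒜 :=
      Matrix.fromBlocks 0 (⅟Q₂) (⅟Q₁) (-(⅟Q₁ * v₁ * u₂ * ⅟Q₂))
    Q * Qinv = 1 ∧ Qinv * Q = 1 ∧
      -(Matrix.fromCols (0 : Matrix (Fin 1) (Fin n₂) 𝒜) u₁ * Qinv *
        Matrix.fromRows (0 : Matrix (Fin n₁) (Fin 1) 𝒜) v₂) =
        -(u₁ * ⅟Q₁ * v₁) * -(u₂ * ⅟Q₂ * v₂) := by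
  intro Q Qinv
  refine ⟨?_, ?_, ?_⟩
  · simp only [Q, Qinv, Matrix.fromBlocks_multiply, ← Matrix.fromBlocks_one]
    congr 1 <;>
      simp [Matrix.mul_assoc, Matrix.mul_invOf_cancel_left, Matrix.invOf_mul_cancel_left]
  · simp only [Q, Qinv, Matrix.fromBlocks_multiply, ← Matrix.fromBlocks_one,
      Matrix.zero_mul, Matrix.mul_zero, add_zero, zero_add, invOf_mul_self, Matrix.mul_one, mul_one,
      Matrix.neg_mul, Matrix.invOf_mul_cancel_right, Matrix.mul_assoc, neg_add_cancel, add_neg_cancel]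
  · simp only [Qinv, Matrix.fromCols_mul_fromBlocks, Matrix.fromCols_mul_fromRows,
      Matrix.zero_mul, Matrix.mul_zero, zero_add, add_zero, Matrix.mul_neg, Matrix.neg_mul,
      neg_neg, Matrix.mul_assoc]
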